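/- Let x be a complex number with Re(x) ≠ 0 and define the Newton iteration x₀ = x, x_{k+1} = (1/2)(x_k + 1/x_k). Then every iterate has Re(x_k) of the same sign as Re(x), all x_k are nonzero, and x_k → sign(x) (= 1 if Re(x) > 0, -1 if Re(x) < 0); moreover |x_{k+1} - s| = |x_k - s|²/(2|x_k|) where s = sign(x). -/

import Mathlib

open Filter

theorem scalar_newton_sign_convergence (x : ℂ) (hx : x.re ≠ 0)
    (z : ℕ → ℂ) (hz0 : z 0 = x)
    (hzs : ∀ k, z (k + 1) = (1/2) * (z k + (z k)⁻¹))
    (s : ℂ) (hs : s = if 0 < x.re then 1 else -1) :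
    (∀ k, 0 < (z k).re * x.re)
    ∧ (∀ k, z k ≠ 0)
    ∧ Tendsto z atTop (nhds s)
    ∧ (∀ k, ‖z (k + 1) - s‖
        = ‖z k - s‖ ^ 2 / (2 * ‖z k‖)) := by
  have hs2 : s ^ 2 = 1 := by rw [hs]; split <;> ring
  have hsim : s.im = 0 := by rw [hs]; split <;> simp
  have hsre : 0 < s.re * x.re := by
    rw [hs]; split
    · simpa using ‹0 < x.re›
    · have : x.re < 0 := lt_of_le_of_ne (not_lt.1 ‹¬0 < x.re›) hx
      simp only [Complex.neg_re, Complex.one_re]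
      nlinarith
  -- sign of real part preserved
  have hre : ∀ k, 0 < (z k).re * x.re := by
    intro k
    induction k with
    | zero => rw [hz0]; exact mul_self_pos.2 hx
    | succ n ih =>
      have hzn : z n ≠ 0 := by
        intro h; rw [h] at ih; simp at ih
      have hns : 0 < Complex.normSq (z n) := Complex.normSq_pos.2 hzn
      have hrec : (z (n+1)).re = ((z n).re + (z n).re / Complex.normSq (z n)) / 2 := by
        rw [hzs]
        simp [Complex.mul_re, Complex.add_re, Complex.add_im, Complex.inv_re,
          Complex.inv_im, Complex.div_re, Complex.div_im]
        ring
      have h1 : 0 < (z n).re * x.re / Complex.normSq (z n) := div_pos ih hns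
      have : (z (n+1)).re * x.re
          = ((z n).re * x.re + (z n).re * x.re / Complex.normSq (z n)) / 2 := by
        rw [hrec]; ring
      rw [this]; positivity
  have hzne : ∀ k, z k ≠ 0 := by
    intro k h; have := hre k; rw [h] at this; simp at this
  -- key identities
  have key : ∀ k, z (k+1) - s = (z k - s)^2 / (2 * z k) := by
    intro k
    have h2 : (2 : ℂ) * z k ≠ 0 := mul_ne_zero two_ne_zero (hzne k)
    rw [hzs, eq_div_iff h2]
    field_simp [hzne k]
    linear_combination (-1 : ℂ) * hs2
  have key' : ∀ k, z (k+1) + s = (z k + s)^2 / (2 * z k) := by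
    intro k
    have h2 : (2 : ℂ) * z k ≠ 0 := mul_ne_zero two_ne_zero (hzne k)
    rw [hzs, eq_div_iff h2]
    field_simp [hzne k]
    linear_combination (-1 : ℂ) * hs2
  -- z k + s ≠ 0
  have hzs_ne : ∀ k, z k + s ≠ 0 := by
    intro k h
    have h1 : (z k + s).re * x.re = (z k).re * x.re + s.re * x.re := by
      simp [Complex.add_re]; ring
    have h2 : 0 < (z k + s).re * x.re := by rw [h1]; linarith [hre k, hsre]
    rw [h] at h2; simp at h2
  -- ratio
  set r : ℕ → ℂ := fun k => (z k - s) / (z k + s) with hrdef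
  have hrrec : ∀ k, r (k+1) = (r k)^2 := by
    intro k
    have h2 : (2 : ℂ) * z k ≠ 0 := mul_ne_zero two_ne_zero (hzne k)
    simp only [hrdef]
    rw [key, key', div_pow]
    field_simp
    rw [mul_div_mul_left _ _ (hzne k)]
  have hrpow : ∀ k, r k = r 0 ^ (2^k) := by
    intro k
    induction k with
    | zero => simp
    | succ n ih =>
      rw [hrrec, ih, ← pow_mul, pow_succ]
  -- |r 0| < 1
  have hr0lt : ‖r 0‖ < 1 := by
    have hx0 : z 0 = x := hz0
    have hns : Complex.normSq (x - s) < Complex.normSq (x + s) := by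
      simp only [Complex.normSq_apply, Complex.sub_re, Complex.sub_im,
        Complex.add_re, Complex.add_im, hsim]
      nlinarith [hsre]
    have habs : ‖x - s‖ < ‖x + s‖ := by
      rw [Complex.norm_def, Complex.norm_def]
      exact Real.sqrt_lt_sqrt (Complex.normSq_nonneg _) hns
    have hpos : 0 < ‖x + s‖ := by
      have := hzs_ne 0; rw [hx0] at this
      exact norm_pos_iff.2 this
    simp only [hrdef, hx0, norm_div]
    rw [div_lt_one hpos]
    exact habs
  -- r → 0
  have hr0 : Tendsto r atTop (nhds 0) := by
    apply squeeze_zero_norm (a := fun k => ‖r 0‖ ^ k)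
    · intro n
      have : ‖r n‖ = ‖r 0‖ ^ (2^n) := by
        rw [hrpow n]; simp [norm_pow]
      rw [this]
      exact pow_le_pow_of_le_one (norm_nonneg _) hr0lt.le (Nat.le_of_lt Nat.lt_two_pow_self)
    · exact tendsto_pow_atTop_nhds_zero_of_lt_one (norm_nonneg _) hr0lt
  -- z in terms of r
  have hzr : ∀ k, z k = s * (1 + r k) / (1 - r k) := by
    intro k
    have hne : (1 : ℂ) - r k ≠ 0 := by
      intro h
      have hrk1 : r k = 1 := by linear_combination -h
      have hrk1' : (z k - s) / (z k + s) = 1 := hrk1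
      have heq : z k - s = z k + s := (div_eq_one_iff_eq (hzs_ne k)).1 hrk1'
      have hs0 : s = 0 := by linear_combination (-(1:ℂ)/2) * heq
      rw [hs0] at hs2; simp at hs2
    have hrk : r k = (z k - s) / (z k + s) := rfl
    rw [eq_div_iff hne, hrk]
    field_simp [hzs_ne k]
    ring
  -- convergence
  have hconv : Tendsto z atTop (nhds s) := by
    have h1 : Tendsto (fun k => s * (1 + r k) / (1 - r k)) atTop
        (nhds (s * (1 + 0) / (1 - 0))) := by
      apply Tendsto.div
      · exact (tendsto_const_nhds.add hr0).const_mul s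
      · exact tendsto_const_nhds.sub hr0
      · norm_num
    simp only [add_zero, sub_zero, mul_one, div_one] at h1
    exact h1.congr (fun k => (hzr k).symm)
  refine ⟨hre, hzne, hconv, ?_⟩
  intro k
  rw [key k]
  simp [norm_div, norm_mul, norm_pow, Complex.norm_two]
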